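/- For each positive integer m and t ∈ [0, 1/m], define τ_m(t) = 1 − (1 − m·t)^{1/m}. Then: (i) for each fixed m, the function t ↦ τ_m(t) is strictly increasing on [0, 1/m]; and (ii) for each fixed integer n ≥ 1, the difference τ_{n+1}(t) − τ_n(t) = (1 − n·t)^{1/n} − (1 − (n+1)·t)^{1/(n+1)} is strictly increasing in t on [0, 1/(n+1)). -/

import Mathlib

open Set

private lemma hasDerivAt_aux (c p t : ℝ) (h : 1 - c * t ≠ 0) :
    HasDerivAt (fun t : ℝ => (1 - c * t) ^ p)
      (p * (1 - c * t) ^ (p - 1) * (-c)) t := by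
  have hinner : HasDerivAt (fun t : ℝ => 1 - c * t) (-c) t :=
    by simpa using ((hasDerivAt_id t).const_mul c).const_sub 1
  exact (Real.hasDerivAt_rpow_const (Or.inl h)).comp t hinner

/-- **Lemma (monotonicity of the independent-rule thresholds).**
With `τ_m(t) = 1 - (1 - m·t)^{1/m}`:
(i) for each `m ≥ 1`, `t ↦ τ_m(t)` is strictly increasing on `[0, 1/m]`; and
(ii) for each `n ≥ 1`, the difference
`τ_{n+1}(t) - τ_n(t) = (1 - n·t)^{1/n} - (1 - (n+1)·t)^{1/(n+1)}`
is strictly increasing on `[0, 1/(n+1))`. -/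
theorem threshold_monotonicity :
    (∀ m : ℕ, 1 ≤ m →
      StrictMonoOn (fun t : ℝ => 1 - (1 - (m : ℝ) * t) ^ ((1 : ℝ) / (m : ℝ)))
        (Set.Icc 0 (1 / (m : ℝ)))) ∧
    (∀ n : ℕ, 1 ≤ n →
      StrictMonoOn
        (fun t : ℝ => (1 - (n : ℝ) * t) ^ ((1 : ℝ) / (n : ℝ)) -
          (1 - ((n : ℝ) + 1) * t) ^ ((1 : ℝ) / ((n : ℝ) + 1)))
        (Set.Ico 0 (1 / ((n : ℝ) + 1)))) := by
  constructor
  · intro m hm t1 ht1 t2 ht2 hlt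
    have hmpos : (0 : ℝ) < m := by exact_mod_cast hm
    have h2 : 0 ≤ 1 - (m : ℝ) * t2 := by
      have := ht2.2
      rw [le_div_iff₀ hmpos] at this
      linarith [this]
    have h12 : 1 - (m : ℝ) * t2 < 1 - (m : ℝ) * t1 := by nlinarith
    have hexp : 0 < (1 : ℝ) / m := by positivity
    have := Real.rpow_lt_rpow h2 h12 hexp
    simp only
    linarith
  · intro n hn
    have hnpos : (0 : ℝ) < n := by exact_mod_cast hn
    have hn1pos : (0 : ℝ) < (n : ℝ) + 1 := by linarith
    set f : ℝ → ℝ := fun t => (1 - (n : ℝ) * t) ^ ((1 : ℝ) / (n : ℝ)) -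
      (1 - ((n : ℝ) + 1) * t) ^ ((1 : ℝ) / ((n : ℝ) + 1)) with hf
    apply strictMonoOn_of_deriv_pos (convex_Ico _ _)
    · apply ContinuousOn.sub
      · exact ((continuous_const.sub (continuous_const.mul continuous_id)).rpow_const
          (fun x => Or.inr (by positivity))).continuousOn
      · exact ((continuous_const.sub (continuous_const.mul continuous_id)).rpow_const
          (fun x => Or.inr (by positivity))).continuousOn
    · intro t ht
      rw [interior_Ico] at ht
      obtain ⟨ht0, ht1⟩ := ht
      have ha : 0 < 1 - ((n : ℝ) + 1) * t := by
        rw [lt_div_iff₀ hn1pos] at ht1; linarith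
      have hb : 1 - ((n : ℝ) + 1) * t < 1 - (n : ℝ) * t := by nlinarith
      have hb1 : 1 - (n : ℝ) * t < 1 := by nlinarith
      have hd1 := hasDerivAt_aux (n : ℝ) ((1 : ℝ) / n) t (ha.trans hb).ne'
      have hd2 := hasDerivAt_aux ((n : ℝ) + 1) ((1 : ℝ) / ((n : ℝ) + 1)) t ha.ne'
      have hderiv : HasDerivAt f
          (((1:ℝ)/n * (1 - (n : ℝ) * t) ^ ((1:ℝ)/n - 1) * (-(n:ℝ))) -
           ((1:ℝ)/((n:ℝ)+1) * (1 - ((n : ℝ)+1) * t) ^ ((1:ℝ)/((n:ℝ)+1) - 1) * (-((n:ℝ)+1)))) t :=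
        hd1.sub hd2
      rw [hderiv.deriv]
      have e1 : (1:ℝ)/n * (1 - (n : ℝ) * t) ^ ((1:ℝ)/n - 1) * (-(n:ℝ))
          = -((1 - (n : ℝ) * t) ^ ((1:ℝ)/n - 1)) := by
        field_simp
      have e2 : (1:ℝ)/((n:ℝ)+1) * (1 - ((n : ℝ)+1) * t) ^ ((1:ℝ)/((n:ℝ)+1) - 1) * (-((n:ℝ)+1))
          = -((1 - ((n : ℝ)+1) * t) ^ ((1:ℝ)/((n:ℝ)+1) - 1)) := by
        field_simp
      rw [e1, e2]
      have key : (1 - (n : ℝ) * t) ^ ((1:ℝ)/n - 1) <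
          (1 - ((n : ℝ)+1) * t) ^ ((1:ℝ)/((n:ℝ)+1) - 1) := by
        have step1 : (1 - (n : ℝ) * t) ^ ((1:ℝ)/n - 1) ≤
            (1 - ((n : ℝ)+1) * t) ^ ((1:ℝ)/n - 1) := by
          apply Real.rpow_le_rpow_of_nonpos ha hb.le
          rw [sub_nonpos, div_le_one hnpos]
          exact_mod_cast hn
        have step2 : (1 - ((n : ℝ)+1) * t) ^ ((1:ℝ)/n - 1) <
            (1 - ((n : ℝ)+1) * t) ^ ((1:ℝ)/((n:ℝ)+1) - 1) := by
          apply Real.rpow_lt_rpow_of_exponent_gt ha (by linarith)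
          have : (1:ℝ)/((n:ℝ)+1) < 1/n := by
            apply one_div_lt_one_div_of_lt hnpos; linarith
          linarith
        exact step1.trans_lt step2
      linarith
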